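/- Let (W_i)_{i∈ℤ} be a stationary ergodic sequence of real random variables with E[max(−W_1, 0)] < ∞ (so that E W_1 ∈ ℝ ∪ {+∞}). Fix κ > 0 and let R = {(τ_1,τ_2) ∈ [0,1]²: τ_1 < τ_2, τ_2 − τ_1 ≥ κ}. Then lim inf_{n→∞} inf_{(τ_1,τ_2)∈R} (1/(n(τ_2−τ_1))) ∑_{i=⌊nτ_1⌋+1}^{⌊nτ_2⌋} W_i ≥ E W_1 almost surely. -/

import Mathlib

open MeasureTheory Filter
open scoped ENNReal NNReal

namespace Stmt12Aux

variable {Ω : Type*} [MeasurableSpace Ω] {μ : Measure Ω} {T : Ω → Ω} {h g : Ω → ℝ}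

lemma integrable_comp_mp (hTm : MeasurePreserving T μ μ) (hu : Integrable h μ) :
    Integrable (fun ω => h (T ω)) μ := by
  have h1 : AEStronglyMeasurable h (Measure.map T μ) := by rw [hTm.map_eq]; exact hu.1
  have := (integrable_map_measure h1 hTm.measurable.aemeasurable).mp
    (by rw [hTm.map_eq]; exact hu)
  exact this

lemma integral_comp_mp (hTm : MeasurePreserving T μ μ) (hu : AEStronglyMeasurable h μ) :
    ∫ ω, h (T ω) ∂μ = ∫ ω, h ω ∂μ := by
  rw [← integral_map hTm.measurable.aemeasurable (by rwa [hTm.map_eq]), hTm.map_eq]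

lemma integrable_comp_iterate (hTm : MeasurePreserving T μ μ) (hu : Integrable h μ) (i : ℕ) :
    Integrable (fun ω => h (T^[i] ω)) μ := by
  induction i with
  | zero => simpa using hu
  | succ k ih =>
      have h2 : Integrable (fun ω => (fun x => h (T^[k] x)) (T ω)) μ :=
        integrable_comp_mp (h := fun x => h (T^[k] x)) hTm ih
      simpa [Function.iterate_succ_apply] using h2

lemma integrable_birkhoffSum (hTm : MeasurePreserving T μ μ) (hu : Integrable h μ) (n : ℕ) :
    Integrable (fun ω => birkhoffSum T h n ω) μ := by
  simpa [birkhoffSum] using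
    integrable_finset_sum (Finset.range n) fun i _ => integrable_comp_iterate hTm hu i

lemma measurable_birkhoffSum (hTm : Measurable T) (hm : Measurable h) (n : ℕ) :
    Measurable (birkhoffSum T h n) :=
  Finset.measurable_sum _ fun i _ => hm.comp (hTm.iterate i)

/-- Running maximum `max_{0 ≤ k ≤ N} S_k`. -/
noncomputable def maxS (T : Ω → Ω) (h : Ω → ℝ) : ℕ → Ω → ℝ
  | 0 => fun _ => 0
  | (N + 1) => fun ω => max (maxS T h N ω) (birkhoffSum T h (N + 1) ω)

lemma maxS_nonneg (N : ℕ) (ω : Ω) : 0 ≤ maxS T h N ω := by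
  induction N with
  | zero => simp [maxS]
  | succ k ih => exact le_trans ih (le_max_left _ _)

lemma maxS_mono_succ (N : ℕ) (ω : Ω) : maxS T h N ω ≤ maxS T h (N + 1) ω := le_max_left _ _

lemma birkhoffSum_le_maxS {k N : ℕ} (hkN : k ≤ N) (ω : Ω) :
    birkhoffSum T h k ω ≤ maxS T h N ω := by
  induction N with
  | zero => interval_cases k; simp [maxS]
  | succ M ih =>
      rcases Nat.lt_or_ge k (M + 1) with hk | hk
      · exact le_trans (ih (Nat.lt_succ_iff.mp hk)) (maxS_mono_succ M ω)
      · have : k = M + 1 := le_antisymm hkN hk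
        subst this
        exact le_max_right _ _

lemma maxS_key (N : ℕ) (ω : Ω) : maxS T h N ω ≤ max 0 (h ω + maxS T h N (T ω)) := by
  induction N with
  | zero => simp [maxS]
  | succ M ih =>
      have h1 : birkhoffSum T h (M + 1) ω = h ω + birkhoffSum T h M (T ω) :=
        birkhoffSum_succ' T h M ω
      refine max_le ?_ ?_
      · exact le_trans ih (max_le_max le_rfl
          (add_le_add le_rfl (maxS_mono_succ (T := T) (h := h) M (T ω))))
      · refine le_trans ?_ (le_max_right 0 _)
        rw [h1]
        have : birkhoffSum T h M (T ω) ≤ maxS T h (M + 1) (T ω) :=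
          birkhoffSum_le_maxS (Nat.le_succ M) (T ω)
        linarith
  
lemma maxS_pos_exists {N : ℕ} {ω : Ω} (hpos : 0 < maxS T h N ω) :
    ∃ k, 1 ≤ k ∧ k ≤ N ∧ 0 < birkhoffSum T h k ω := by
  induction N with
  | zero => simp [maxS] at hpos
  | succ M ih =>
      rcases lt_max_iff.mp (by simpa [maxS] using hpos) with hp | hp
      · obtain ⟨k, h1, h2, h3⟩ := ih hp
        exact ⟨k, h1, h2.trans (Nat.le_succ M), h3⟩
      · exact ⟨M + 1, Nat.succ_le_succ (Nat.zero_le M), le_rfl, hp⟩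

lemma measurable_maxS (hTm : Measurable T) (hm : Measurable h) (N : ℕ) :
    Measurable (maxS T h N) := by
  induction N with
  | zero => simpa [maxS] using measurable_const
  | succ M ih => exact ih.max (measurable_birkhoffSum hTm hm (M + 1))

lemma integrable_maxS (hTm : MeasurePreserving T μ μ) (hu : Integrable h μ) (N : ℕ) :
    Integrable (maxS T h N) μ := by
  induction N with
  | zero => simpa [maxS] using integrable_const (0 : ℝ)
  | succ M ih =>
      exact ih.sup (integrable_birkhoffSum hTm hu (M + 1))

lemma hopf (hTm : MeasurePreserving T μ μ) (hh : Integrable h μ) (hmh : Measurable h)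
    (N : ℕ) : 0 ≤ ∫ ω in {ω | 0 < maxS T h N ω}, h ω ∂μ := by
  set A : Set Ω := {ω | 0 < maxS T h N ω} with hA
  have hAmeas : MeasurableSet A := measurableSet_lt measurable_const (measurable_maxS hTm.measurable hmh N)
  have hMint : Integrable (maxS T h N) μ := integrable_maxS hTm hh N
  have hMTint : Integrable (fun ω => maxS T h N (T ω)) μ :=
    integrable_comp_mp (h := maxS T h N) hTm hMint
  -- pointwise inequality on A
  have hptwise : ∀ ω ∈ A, maxS T h N ω - maxS T h N (T ω) ≤ h ω := by
    intro ω hω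
    have hk := maxS_key (T := T) (h := h) N ω
    rcases max_cases (0 : ℝ) (h ω + maxS T h N (T ω)) with ⟨he, _⟩ | ⟨he, _⟩
    · rw [he] at hk
      exact absurd (lt_of_lt_of_le hω hk) (lt_irrefl 0)
    · rw [he] at hk; linarith
  have step1 : ∫ ω in A, (maxS T h N ω - maxS T h N (T ω)) ∂μ ≤ ∫ ω in A, h ω ∂μ :=
    setIntegral_mono_on (hMint.sub hMTint).integrableOn hh.integrableOn hAmeas hptwise
  have step2 : ∫ ω in A, (maxS T h N ω - maxS T h N (T ω)) ∂μ
      = ∫ ω in A, maxS T h N ω ∂μ - ∫ ω in A, maxS T h N (T ω) ∂μ :=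
    integral_sub hMint.integrableOn hMTint.integrableOn
  have step3 : ∫ ω in A, maxS T h N ω ∂μ = ∫ ω, maxS T h N ω ∂μ := by
    have hcompl : ∫ ω in Aᶜ, maxS T h N ω ∂μ = 0 := by
      apply setIntegral_eq_zero_of_forall_eq_zero
      intro x hx
      have h1 : ¬ (0 < maxS T h N x) := hx
      exact le_antisymm (not_lt.mp h1) (maxS_nonneg N x)
    have := integral_add_compl hAmeas hMint
    rw [hcompl] at this; linarith
  have step4 : ∫ ω in A, maxS T h N (T ω) ∂μ ≤ ∫ ω, maxS T h N (T ω) ∂μ :=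
    setIntegral_le_integral hMTint (Eventually.of_forall fun ω => maxS_nonneg N (T ω))
  have step5 : ∫ ω, maxS T h N (T ω) ∂μ = ∫ ω, maxS T h N ω ∂μ :=
    integral_comp_mp (h := maxS T h N) hTm hMint.1
  linarith

lemma hopf_total (hTm : MeasurePreserving T μ μ) (hh : Integrable h μ) (hmh : Measurable h)
    (hA : μ {ω | ∃ n, 1 ≤ n ∧ 0 < birkhoffSum T h n ω} = 1) [IsProbabilityMeasure μ] :
    0 ≤ ∫ ω, h ω ∂μ := by
  set A : Set Ω := {ω | ∃ n, 1 ≤ n ∧ 0 < birkhoffSum T h n ω} with hAdef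
  set s : ℕ → Set Ω := fun N => {ω | 0 < maxS T h N ω} with hs
  have hsm : ∀ N, MeasurableSet (s N) := fun N =>
    measurableSet_lt measurable_const (measurable_maxS hTm.measurable hmh N)
  have hmono : Monotone s := by
    intro i j hij ω hω
    induction j with
    | zero => simpa using (Nat.le_zero.mp hij ▸ hω)
    | succ k ih =>
        rcases Nat.lt_or_ge i (k+1) with hk | hk
        · exact lt_of_lt_of_le (ih (Nat.lt_succ_iff.mp hk)) (maxS_mono_succ k ω)
        · have : i = k + 1 := le_antisymm hij hk
          subst this; exact hω
  have hunion : (⋃ N, s N) = A := by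
    ext ω
    constructor
    · rintro ⟨t, ⟨N, rfl⟩, hω⟩
      obtain ⟨k, h1, _, h3⟩ := maxS_pos_exists hω
      exact ⟨k, h1, h3⟩
    · rintro ⟨n, h1, h2⟩
      exact Set.mem_iUnion.mpr ⟨n, lt_of_lt_of_le h2 (birkhoffSum_le_maxS le_rfl ω)⟩
  have hInt : IntegrableOn h (⋃ N, s N) μ := hh.integrableOn
  have htend := tendsto_setIntegral_of_monotone hsm hmono hInt
  have hlim : 0 ≤ ∫ ω in ⋃ N, s N, h ω ∂μ :=
    ge_of_tendsto htend (Eventually.of_forall fun N => hopf hTm hh hmh N)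
  rw [hunion] at hlim
  have hAuniv : A =ᵐ[μ] Set.univ := by
    rw [ae_eq_univ_iff_measure_eq]
    · simpa using hA
    · exact (MeasurableSet.nullMeasurableSet (by
        have : MeasurableSet A := by
          rw [← hunion]; exact MeasurableSet.iUnion hsm
        exact this))
  calc (0:ℝ) ≤ ∫ ω in A, h ω ∂μ := hlim
    _ = ∫ ω in Set.univ, h ω ∂μ := setIntegral_congr_set hAuniv
    _ = ∫ ω, h ω ∂μ := by rw [Measure.restrict_univ]

/-- The set where the Birkhoff averages frequently exceed `c`. -/
def Bad (T : Ω → Ω) (g : Ω → ℝ) (c : ℝ) : Set Ω :=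
  {ω | ∃ᶠ n in atTop, c * n < birkhoffSum T g n ω}

lemma measurableSet_bad (hTm : Measurable T) (hmg : Measurable g) (c : ℝ) :
    MeasurableSet (Bad T g c) := by
  have : Bad T g c = ⋂ N, ⋃ n, ⋃ _ : N ≤ n, {ω | c * n < birkhoffSum T g n ω} := by
    ext ω
    simp only [Bad, Set.mem_setOf_eq, frequently_atTop, Set.mem_iInter, Set.mem_iUnion]
    exact ⟨fun H N => (H N).imp fun n hn => ⟨hn.1, hn.2⟩,
      fun H N => (H N).imp fun n hn => ⟨hn.1, hn.2⟩⟩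
  rw [this]
  exact MeasurableSet.iInter fun N => MeasurableSet.iUnion fun n => MeasurableSet.iUnion fun _ =>
    measurableSet_lt measurable_const (measurable_birkhoffSum hTm hmg n)

lemma bad_shift1 {c c' : ℝ} (hcc : c' < c) {ω : Ω} (hω : ω ∈ Bad T g c) :
    T ω ∈ Bad T g c' := by
  rw [Bad, Set.mem_setOf_eq, frequently_atTop] at hω ⊢
  intro N
  set M := Nat.ceil ((g ω - c') / (c - c')) with hM
  obtain ⟨n, hn, hlt⟩ := hω (max (N + 1) (M + 1))
  have hn1 : N + 1 ≤ n := le_trans (le_max_left _ _) hn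
  have hnM : M + 1 ≤ n := le_trans (le_max_right _ _) hn
  obtain ⟨k, rfl⟩ : ∃ k, n = k + 1 := ⟨n - 1, by omega⟩
  refine ⟨k, by omega, ?_⟩
  rw [birkhoffSum_succ'] at hlt
  have hMk : (g ω - c') / (c - c') ≤ (k : ℝ) := by
    calc (g ω - c') / (c - c') ≤ (M : ℝ) := Nat.le_ceil _
      _ ≤ (k : ℝ) := by exact_mod_cast (by omega : M ≤ k)
  have hdiv : g ω - c' ≤ (c - c') * k := by
    rw [div_le_iff₀ (by linarith)] at hMk
    linarith
  push_cast at hlt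
  linarith

lemma bad_shift2 {c c' : ℝ} (hcc : c' < c) {ω : Ω} (hω : T ω ∈ Bad T g c) :
    ω ∈ Bad T g c' := by
  rw [Bad, Set.mem_setOf_eq, frequently_atTop] at hω ⊢
  intro N
  set M := Nat.ceil ((c' - g ω) / (c - c')) with hM
  obtain ⟨n, hn, hlt⟩ := hω (max N M)
  have hn1 : N ≤ n := le_trans (le_max_left _ _) hn
  have hnM : M ≤ n := le_trans (le_max_right _ _) hn
  refine ⟨n + 1, by omega, ?_⟩
  rw [birkhoffSum_succ']
  have hMn : (c' - g ω) / (c - c') ≤ (n : ℝ) := by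
    calc (c' - g ω) / (c - c') ≤ (M : ℝ) := Nat.le_ceil _
      _ ≤ (n : ℝ) := by exact_mod_cast hnM
  have hdiv : c' - g ω ≤ (c - c') * n := by
    rw [div_le_iff₀ (by linarith)] at hMn
    linarith
  push_cast
  linarith

lemma birkhoffSum_sub_const (T : Ω → Ω) (g : Ω → ℝ) (c : ℝ) (n : ℕ) (ω : Ω) :
    birkhoffSum T (fun x => g x - c) n ω = birkhoffSum T g n ω - n * c := by
  simp [birkhoffSum, Finset.sum_sub_distrib, mul_comm]

lemma oneSided [IsProbabilityMeasure μ] (hT : Ergodic T μ) (hg : Integrable g μ)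
    (hmg : Measurable g) {c : ℝ} (hc : ∫ x, g x ∂μ < c) :
    ∀ᵐ ω ∂μ, ∀ᶠ n : ℕ in atTop, birkhoffSum T g n ω ≤ c * n := by
  set m := ∫ x, g x ∂μ with hm
  set c' : ℝ := (m + c) / 2 with hc'
  have hc'1 : m < c' := by rw [hc']; linarith
  have hc'2 : c' < c := by rw [hc']; linarith
  set D : Set Ω := ⋃ (q : ℚ) (_ : c' < (q : ℝ)), Bad T g q with hD
  have hTm : Measurable T := hT.toMeasurePreserving.measurable
  have hDmeas : MeasurableSet D :=
    MeasurableSet.iUnion fun q => MeasurableSet.iUnion fun _ => measurableSet_bad hTm hmg q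
  have hDinv : T ⁻¹' D = D := by
    ext ω
    simp only [hD, Set.mem_preimage, Set.mem_iUnion]
    constructor
    · rintro ⟨q, hq, hb⟩
      obtain ⟨q', hq'1, hq'2⟩ := exists_rat_btwn hq
      exact ⟨q', hq'1, bad_shift2 (by exact_mod_cast hq'2) hb⟩
    · rintro ⟨q, hq, hb⟩
      obtain ⟨q', hq'1, hq'2⟩ := exists_rat_btwn hq
      exact ⟨q', hq'1, bad_shift1 (by exact_mod_cast hq'2) hb⟩
  rcases hT.toPreErgodic.ae_empty_or_univ hDmeas hDinv with hzero | huniv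
  · -- the good case : D is null
    have hDnull : μ D = 0 := by
      have := measure_congr hzero
      simpa using this
    obtain ⟨q0, hq01, hq02⟩ := exists_rat_btwn hc'2
    have : ∀ᵐ ω ∂μ, ω ∉ D := by
      rw [ae_iff]
      simpa using hDnull
    filter_upwards [this] with ω hω
    have hnotbad : ω ∉ Bad T g q0 := fun hb =>
      hω (Set.mem_iUnion.mpr ⟨q0, Set.mem_iUnion.mpr ⟨hq01, hb⟩⟩)
    rw [Bad, Set.mem_setOf_eq, not_frequently] at hnotbad
    filter_upwards [hnotbad] with n hn
    have h1 : birkhoffSum T g n ω ≤ (q0 : ℝ) * n := not_lt.mp hn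
    have h2 : (q0 : ℝ) * n ≤ c * n :=
      mul_le_mul_of_nonneg_right (le_of_lt hq02) (Nat.cast_nonneg n)
    linarith
  · -- D conull gives a contradiction with the maximal lemma
    exfalso
    set h : Ω → ℝ := fun ω => g ω - c' with hhdef
    have hhint : Integrable h μ := hg.sub (integrable_const c')
    have hhm : Measurable h := hmg.sub measurable_const
    have hDA : D ⊆ {ω | ∃ n, 1 ≤ n ∧ 0 < birkhoffSum T h n ω} := by
      rintro ω hωD
      obtain ⟨q, hq2, hb⟩ := Set.mem_iUnion₂.mp hωD
      rw [Bad, Set.mem_setOf_eq, frequently_atTop] at hb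
      obtain ⟨n, hn1, hn2⟩ := hb 1
      refine ⟨n, hn1, ?_⟩
      rw [hhdef, birkhoffSum_sub_const]
      have : c' * n ≤ (q:ℝ) * n := by
        apply mul_le_mul_of_nonneg_right (le_of_lt hq2) (Nat.cast_nonneg n)
      have hn1' : (1:ℝ) ≤ (n:ℝ) := by exact_mod_cast hn1
      nlinarith [hn2]
    have hmuD : μ D = 1 := by
      have := measure_congr huniv
      simpa using this
    have hA1 : μ {ω | ∃ n, 1 ≤ n ∧ 0 < birkhoffSum T h n ω} = 1 := by
      have hle : (1:ℝ≥0∞) ≤ μ {ω | ∃ n, 1 ≤ n ∧ 0 < birkhoffSum T h n ω} := by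
        rw [← hmuD]; exact measure_mono hDA
      exact le_antisymm prob_le_one hle
    have := hopf_total hT.toMeasurePreserving hhint hhm hA1
    have hintc : ∫ ω, h ω ∂μ = m - c' := by
      rw [hhdef]
      rw [integral_sub hg (integrable_const c')]
      simp [hm]
    rw [hintc] at this
    linarith

lemma twoSided [IsProbabilityMeasure μ] (hT : Ergodic T μ) (hg : Integrable g μ)
    (hmg : Measurable g) {ε : ℝ} (hε : 0 < ε) :
    ∀ᵐ ω ∂μ, ∀ᶠ n : ℕ in atTop,
      |birkhoffSum T g n ω - (∫ x, g x ∂μ) * n| ≤ ε * n := by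
  set m := ∫ x, g x ∂μ with hm
  have h1 := oneSided hT hg hmg (c := m + ε) (by linarith)
  have hneg : Integrable (fun x => -g x) μ := hg.neg
  have hnegm : Measurable (fun x => -g x) := hmg.neg
  have hintneg : ∫ x, -g x ∂μ = -m := by rw [integral_neg]
  have h2 := oneSided hT hneg hnegm (c := -m + ε) (by rw [hintneg]; linarith)
  filter_upwards [h1, h2] with ω hω1 hω2
  filter_upwards [hω1, hω2] with n hn1 hn2
  have hbneg : birkhoffSum T (fun x => -g x) n ω = -birkhoffSum T g n ω := by
    simp [birkhoffSum]
  rw [hbneg] at hn2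
  rw [abs_le]
  constructor <;> nlinarith [hn1, hn2]

lemma window [IsProbabilityMeasure μ] (hT : Ergodic T μ) (hg : Integrable g μ)
    (hmg : Measurable g) {q κ : ℝ} (hκ : 0 < κ) (hq : q < ∫ x, g x ∂μ) :
    ∀ᵐ ω ∂μ, ∀ᶠ n : ℕ in atTop, ∀ τ1 τ2 : ℝ, 0 ≤ τ1 → τ2 ≤ 1 → κ ≤ τ2 - τ1 →
      q * ((n : ℝ) * (τ2 - τ1)) ≤
        ∑ i ∈ Finset.Ioc ⌊(n : ℝ) * τ1⌋₊ ⌊(n : ℝ) * τ2⌋₊, g (T^[i] ω) := by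
  set m := ∫ x, g x ∂μ with hm
  set ε : ℝ := κ * (m - q) / 4 with hε
  have hmq : 0 < m - q := by linarith
  have hεpos : 0 < ε := by
    rw [hε]; positivity
  filter_upwards [twoSided hT hg hmg hεpos] with ω hω
  obtain ⟨K, hK⟩ := eventually_atTop.mp hω
  set C : ℝ := ∑ k ∈ Finset.range K, |birkhoffSum T g k ω - m * k| with hC
  have hCnn : 0 ≤ C := Finset.sum_nonneg fun k _ => abs_nonneg _
  have hbound : ∀ k : ℕ, |birkhoffSum T g k ω - m * k| ≤ ε * k + C := by
    intro k
    rcases le_or_gt K k with hk | hk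
    · have := hK k hk
      have : ε * k ≤ ε * k := le_rfl
      linarith [hK k hk]
    · have h1 : |birkhoffSum T g k ω - m * k| ≤ C := by
        rw [hC]
        exact Finset.single_le_sum (f := fun i : ℕ => |birkhoffSum T g i ω - m * (i:ℝ)|)
          (fun i _ => abs_nonneg _) (Finset.mem_range.mpr hk)
      have h2 : 0 ≤ ε * k := by positivity
      linarith
  rw [eventually_atTop]
  refine ⟨max 1 (Nat.ceil ((|m| + 2 * ε + 2 * C) / (2 * ε))), fun n hn τ1 τ2 h01 h12 hκτ => ?_⟩
  have hn1 : 1 ≤ n := le_trans (le_max_left _ _) hn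
  have hnceil : (|m| + 2 * ε + 2 * C) / (2 * ε) ≤ (n : ℝ) := by
    calc (|m| + 2 * ε + 2 * C) / (2 * ε) ≤ (Nat.ceil ((|m| + 2 * ε + 2 * C) / (2 * ε)) : ℝ) :=
          Nat.le_ceil _
      _ ≤ (n : ℝ) := by exact_mod_cast le_trans (le_max_right _ _) hn
  have hnbig : |m| + 2 * ε + 2 * C ≤ 2 * ε * n := by
    rw [div_le_iff₀ (by positivity)] at hnceil
    linarith
  set a := ⌊(n : ℝ) * τ1⌋₊ with ha
  set b := ⌊(n : ℝ) * τ2⌋₊ with hb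
  have hτ : 0 < τ2 - τ1 := lt_of_lt_of_le hκ hκτ
  have hτ1τ2 : τ1 ≤ τ2 := by linarith
  have hnτ1 : (0:ℝ) ≤ (n : ℝ) * τ1 := by positivity
  have hnτ2 : (0:ℝ) ≤ (n : ℝ) * τ2 := by nlinarith [Nat.cast_nonneg (α := ℝ) n]
  have hab : a ≤ b := Nat.floor_mono (by nlinarith [Nat.cast_nonneg (α := ℝ) n])
  have hbn : b ≤ n := by
    rw [hb]
    calc ⌊(n : ℝ) * τ2⌋₊ ≤ ⌊(n : ℝ)⌋₊ :=
          Nat.floor_mono (by nlinarith [Nat.cast_nonneg (α := ℝ) n])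
      _ = n := Nat.floor_natCast n
  -- the sum identity
  have hsum : ∑ i ∈ Finset.Ioc a b, g (T^[i] ω)
      = birkhoffSum T g (b + 1) ω - birkhoffSum T g (a + 1) ω := by
    rw [← Finset.Ico_add_one_add_one_eq_Ioc]
    rw [Finset.sum_Ico_eq_sub _ (Nat.add_le_add_right hab 1)]
    rfl
  -- floor bounds
  have hfb1 : ((b : ℝ)) ≤ (n : ℝ) * τ2 := Nat.floor_le hnτ2
  have hfb2 : (n : ℝ) * τ2 < (b : ℝ) + 1 := Nat.lt_floor_add_one _
  have hfa1 : ((a : ℝ)) ≤ (n : ℝ) * τ1 := Nat.floor_le hnτ1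
  have hfa2 : (n : ℝ) * τ1 < (a : ℝ) + 1 := Nat.lt_floor_add_one _
  -- Birkhoff bounds
  have hBb := hbound (b + 1)
  have hBa := hbound (a + 1)
  have hb1n : ((b:ℝ) + 1) ≤ (n : ℝ) + 1 := by
    have : (b : ℝ) ≤ (n : ℝ) := by exact_mod_cast hbn
    linarith
  have ha1n : ((a:ℝ) + 1) ≤ (n : ℝ) + 1 := by
    have h1 : a ≤ n := le_trans hab hbn
    have : (a : ℝ) ≤ (n : ℝ) := by exact_mod_cast h1
    linarith
  rw [abs_le] at hBb hBa
  push_cast at hBb hBa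
  have hSb : birkhoffSum T g (b + 1) ω ≥ m * ((b:ℝ) + 1) - (ε * ((n:ℝ) + 1) + C) := by
    have h1 := hBb.1
    have h2 : ε * ((b:ℝ) + 1) ≤ ε * ((n:ℝ) + 1) :=
      mul_le_mul_of_nonneg_left hb1n (le_of_lt hεpos)
    linarith
  have hSa : birkhoffSum T g (a + 1) ω ≤ m * ((a:ℝ) + 1) + (ε * ((n:ℝ) + 1) + C) := by
    have h1 := hBa.2
    have h2 : ε * ((a:ℝ) + 1) ≤ ε * ((n:ℝ) + 1) :=
      mul_le_mul_of_nonneg_left ha1n (le_of_lt hεpos)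
    linarith
  -- main estimate
  have hyx : m * ((b:ℝ) - (a:ℝ)) ≥ m * ((n:ℝ) * (τ2 - τ1)) - |m| := by
    rcases le_or_gt 0 m with hm0 | hm0
    · have habs : |m| = m := abs_of_nonneg hm0
      have hd : (n:ℝ) * (τ2 - τ1) - 1 ≤ (b:ℝ) - (a:ℝ) := by
        have := hfb2; have := hfa1
        have hexp : (n:ℝ) * (τ2 - τ1) = (n:ℝ) * τ2 - (n:ℝ) * τ1 := by ring
        linarith
      have h5 := mul_le_mul_of_nonneg_left hd hm0
      have hexp2 : m * ((n:ℝ) * (τ2 - τ1) - 1) = m * ((n:ℝ) * (τ2 - τ1)) - m := by ring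
      rw [habs]; linarith
    · have habs : |m| = -m := abs_of_neg hm0
      have hd : (b:ℝ) - (a:ℝ) ≤ (n:ℝ) * (τ2 - τ1) + 1 := by
        have := hfb1; have := hfa2
        have hexp : (n:ℝ) * (τ2 - τ1) = (n:ℝ) * τ2 - (n:ℝ) * τ1 := by ring
        linarith
      have h5 := mul_le_mul_of_nonpos_left hd (le_of_lt hm0)
      have hexp2 : m * ((n:ℝ) * (τ2 - τ1) + 1) = m * ((n:ℝ) * (τ2 - τ1)) + m := by ring
      rw [habs]; linarith
  have hκτ' : κ * (m - q) * (n:ℝ) ≤ (τ2 - τ1) * (m - q) * (n:ℝ) := by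
    have h1 : 0 ≤ (m - q) * (n:ℝ) := by positivity
    have := mul_le_mul_of_nonneg_right hκτ h1
    calc κ * (m - q) * (n:ℝ) = κ * ((m - q) * (n:ℝ)) := by ring
      _ ≤ (τ2 - τ1) * ((m - q) * (n:ℝ)) := this
      _ = (τ2 - τ1) * (m - q) * (n:ℝ) := by ring
  rw [hsum]
  have h4ε : 4 * ε = κ * (m - q) := by rw [hε]; ring
  have hstep1 : birkhoffSum T g (b + 1) ω - birkhoffSum T g (a + 1) ω
      ≥ m * ((n:ℝ) * (τ2 - τ1)) - |m| - 2 * ε * ((n:ℝ) + 1) - 2 * C := by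
    have h2 : m * ((b:ℝ) + 1) - m * ((a:ℝ) + 1) = m * ((b:ℝ) - (a:ℝ)) := by ring
    linarith [hSb, hSa, hyx]
  have hstep2 : m * ((n:ℝ) * (τ2 - τ1)) - |m| - 2 * ε * ((n:ℝ) + 1) - 2 * C
      ≥ q * ((n:ℝ) * (τ2 - τ1)) := by
    have hrw : m * ((n:ℝ) * (τ2 - τ1)) - q * ((n:ℝ) * (τ2 - τ1))
        = (τ2 - τ1) * (m - q) * (n:ℝ) := by ring
    have h2 : (τ2 - τ1) * (m - q) * (n:ℝ) ≥ κ * (m - q) * (n:ℝ) := hκτ'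
    have h3 : κ * (m - q) * (n:ℝ) = 4 * ε * (n:ℝ) := by rw [h4ε]
    have h4 : 2 * ε * ((n:ℝ) + 1) = 2 * ε * (n:ℝ) + 2 * ε := by ring
    linarith
  linarith

lemma chooseg [IsProbabilityMeasure μ] {f : Ω → ℝ}
    (hint : Integrable (fun ω => max (-f ω) 0) μ) {q : ℝ}
    (hq : (q : EReal) < (∫⁻ x, ENNReal.ofReal (f x) ∂μ : ℝ≥0∞) -
        ((∫ x, max (-f x) 0 ∂μ : ℝ) : EReal)) :
    ∃ g : Ω → ℝ, Integrable g μ ∧ Measurable g ∧ (∀ᵐ x ∂μ, g x ≤ f x) ∧ q < ∫ x, g x ∂μ := by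
  set B : ℝ := ∫ x, max (-f x) 0 ∂μ with hB
  set A : ℝ≥0∞ := ∫⁻ x, ENNReal.ofReal (f x) ∂μ with hA
  obtain ⟨h2, h2m, h2ae⟩ : ∃ h2, StronglyMeasurable h2 ∧ (fun ω => max (-f ω) 0) =ᵐ[μ] h2 :=
    ⟨hint.1.mk _, hint.1.stronglyMeasurable_mk, hint.1.ae_eq_mk⟩
  have h2int : Integrable h2 μ := hint.congr h2ae
  have h2meas : Measurable h2 := h2m.measurable
  have hInt2 : ∫ x, h2 x ∂μ = B := (integral_congr_ae h2ae).symm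
  have hqB : ((q + B : ℝ) : EReal) < (A : EReal) := by
    have := (EReal.lt_sub_iff_add_lt (a := (A : EReal)) (b := (B : EReal)) (c := (q : EReal))
      (Or.inl (EReal.coe_ne_bot B)) (Or.inl (EReal.coe_ne_top B))).mp hq
    rw [EReal.coe_add]
    exact this
  rcases lt_or_ge (q + B) 0 with hd | hd
  · refine ⟨fun x => -h2 x, h2int.neg, h2meas.neg, ?_, ?_⟩
    · filter_upwards [h2ae] with x hx
      rw [← hx]
      rcases le_total 0 (f x) with hfx | hfx
      · have : max (-f x) 0 = 0 := max_eq_right (by linarith)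
        rw [this]; linarith
      · have : max (-f x) 0 = -f x := max_eq_left (by linarith)
        rw [this]; linarith
    · rw [integral_neg, hInt2]; linarith
  · have hlt : ENNReal.ofReal (q + B) < A := by
      rw [← EReal.coe_ennreal_lt_coe_ennreal_iff]
      have h0 : ((ENNReal.ofReal (q + B) : ℝ≥0∞) : EReal) = ((q + B : ℝ) : EReal) := by
        rw [EReal.coe_ennreal_ofReal, max_eq_left hd]
      rw [h0]
      exact hqB
    have hAeq : A = ∫⁻ x, ((f x).toNNReal : ℝ≥0∞) ∂μ := by
      rw [hA]
      exact lintegral_congr fun x => rfl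
    rw [hAeq] at hlt
    obtain ⟨gs, hgs_le, hgs_fin, hgs_lt⟩ := exists_lt_lintegral_simpleFunc_of_lt_lintegral hlt
    set φ : Ω → ℝ := fun x => ((gs x : ℝ≥0) : ℝ) with hφ
    have hφm : Measurable φ := by
      simp only [hφ]
      exact measurable_coe_nnreal_real.comp gs.measurable
    have hφnn : ∀ x, 0 ≤ φ x := by
      intro x; simp only [hφ]; exact (gs x).coe_nonneg
    have hφle : ∀ x, φ x ≤ max (f x) 0 := by
      intro x
      simp only [hφ]
      calc ((gs x : ℝ≥0) : ℝ) ≤ ((f x).toNNReal : ℝ) := by exact_mod_cast hgs_le x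
        _ = max (f x) 0 := Real.coe_toNNReal' _
    have hφint : Integrable φ μ := by
      refine ⟨hφm.aestronglyMeasurable, ?_⟩
      simp only [HasFiniteIntegral, hφ, NNReal.nnnorm_eq]
      simpa [Real.enorm_eq_ofReal, ENNReal.ofReal_coe_nnreal] using hgs_fin
    have hφval : ∫ x, φ x ∂μ = (∫⁻ x, ((gs x : ℝ≥0) : ℝ≥0∞) ∂μ).toReal := by
      rw [integral_eq_lintegral_of_nonneg_ae (Eventually.of_forall hφnn)
        hφm.aestronglyMeasurable]
      congr 1
      exact lintegral_congr fun x => ENNReal.ofReal_coe_nnreal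
    have hqφ : q + B < ∫ x, φ x ∂μ := by
      rw [hφval]
      exact (ENNReal.ofReal_lt_iff_lt_toReal hd hgs_fin.ne).mp hgs_lt
    refine ⟨fun x => φ x - h2 x, hφint.sub h2int, hφm.sub h2meas, ?_, ?_⟩
    · filter_upwards [h2ae] with x hx
      have h1 : φ x - h2 x ≤ max (f x) 0 - max (-f x) 0 := by
        rw [← hx]
        linarith [hφle x]
      calc φ x - h2 x ≤ max (f x) 0 - max (-f x) 0 := h1
        _ = f x := max_zero_sub_max_neg_zero_eq_self (f x)
    · rw [integral_sub hφint h2int, hInt2]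
      linarith

end Stmt12Aux

open Stmt12Aux in
/-- Uniform-over-windows ergodic lower bound: for a stationary ergodic sequence
W_i = f(T^i ·) with E max(−W_1,0) < ∞ (so E W_1 ∈ ℝ ∪ {+∞}), and windows of relative
length at least κ, lim inf_n inf over windows of the windowed average is ≥ E W_1 a.s.
The mean is the EReal quantity ∫⁻ f⁺ − ∫ f⁻, and "liminf inf ≥ E W₁" is expressed as:
for every real c < E W₁, eventually all windowed averages are ≥ c. -/
theorem stmt12 {Ω : Type*} [MeasurableSpace Ω] (μ : Measure Ω) [IsProbabilityMeasure μ]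
    (T : Ω → Ω) (hT : Ergodic T μ) (f : Ω → ℝ)
    (hint : Integrable (fun ω => max (-f ω) 0) μ)
    (κ : ℝ) (hκ : 0 < κ) :
    ∀ᵐ ω ∂μ, ∀ c : ℝ,
      (c : EReal) < (∫⁻ x, ENNReal.ofReal (f x) ∂μ : ℝ≥0∞) -
        ((∫ x, max (-f x) 0 ∂μ : ℝ) : EReal) →
      ∀ᶠ n : ℕ in atTop, ∀ τ1 τ2 : ℝ, 0 ≤ τ1 → τ2 ≤ 1 → κ ≤ τ2 - τ1 →
        c ≤ (1 / ((n : ℝ) * (τ2 - τ1))) *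
          ∑ i ∈ Finset.Ioc ⌊(n : ℝ) * τ1⌋₊ ⌊(n : ℝ) * τ2⌋₊, f (T^[i] ω) := by
  have key : ∀ q : ℚ, ∀ᵐ ω ∂μ,
      (((q : ℝ) : EReal) < (∫⁻ x, ENNReal.ofReal (f x) ∂μ : ℝ≥0∞) -
        ((∫ x, max (-f x) 0 ∂μ : ℝ) : EReal)) →
      ∀ᶠ n : ℕ in atTop, ∀ τ1 τ2 : ℝ, 0 ≤ τ1 → τ2 ≤ 1 → κ ≤ τ2 - τ1 →
        (q : ℝ) ≤ (1 / ((n : ℝ) * (τ2 - τ1))) *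
          ∑ i ∈ Finset.Ioc ⌊(n : ℝ) * τ1⌋₊ ⌊(n : ℝ) * τ2⌋₊, f (T^[i] ω) := by
    intro q
    by_cases hq : ((q : ℝ) : EReal) < (∫⁻ x, ENNReal.ofReal (f x) ∂μ : ℝ≥0∞) -
        ((∫ x, max (-f x) 0 ∂μ : ℝ) : EReal)
    · obtain ⟨g, hgint, hgm, hgle, hgq⟩ := chooseg hint hq
      have hw := window hT hgint hgm (q := (q : ℝ)) hκ hgq
      have hcomp : ∀ᵐ ω ∂μ, ∀ i : ℕ, g (T^[i] ω) ≤ f (T^[i] ω) := by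
        rw [ae_all_iff]
        intro i
        have hpre := (hT.toMeasurePreserving.iterate i).quasiMeasurePreserving
        rw [ae_iff] at hgle ⊢
        have hset : {ω | ¬ g (T^[i] ω) ≤ f (T^[i] ω)} = T^[i] ⁻¹' {x | ¬ g x ≤ f x} := rfl
        rw [hset]
        exact hpre.preimage_null hgle
      filter_upwards [hw, hcomp] with ω hω1 hω2
      intro _
      filter_upwards [hω1, eventually_ge_atTop 1] with n hn hn1
      intro τ1 τ2 h01 h12 hκτ
      have hn1' : (1:ℝ) ≤ (n:ℝ) := by exact_mod_cast hn1
      have hτpos : 0 < (n : ℝ) * (τ2 - τ1) := by nlinarith [hκ, hκτ]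
      have hsumle : ∑ i ∈ Finset.Ioc ⌊(n : ℝ) * τ1⌋₊ ⌊(n : ℝ) * τ2⌋₊, g (T^[i] ω)
          ≤ ∑ i ∈ Finset.Ioc ⌊(n : ℝ) * τ1⌋₊ ⌊(n : ℝ) * τ2⌋₊, f (T^[i] ω) :=
        Finset.sum_le_sum fun i _ => hω2 i
      have h2 := hn τ1 τ2 h01 h12 hκτ
      calc (q : ℝ)
          ≤ (∑ i ∈ Finset.Ioc ⌊(n : ℝ) * τ1⌋₊ ⌊(n : ℝ) * τ2⌋₊, f (T^[i] ω))
            / ((n : ℝ) * (τ2 - τ1)) := (le_div_iff₀ hτpos).mpr (le_trans h2 hsumle)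
        _ = (1 / ((n : ℝ) * (τ2 - τ1))) *
            ∑ i ∈ Finset.Ioc ⌊(n : ℝ) * τ1⌋₊ ⌊(n : ℝ) * τ2⌋₊, f (T^[i] ω) :=
          (one_div_mul_eq_div _ _).symm
    · exact ae_of_all μ fun ω h => absurd h hq
  have key' := ae_all_iff.mpr key
  filter_upwards [key'] with ω hω
  intro c hc
  obtain ⟨q, hq1, hq2⟩ := EReal.exists_rat_btwn_of_lt hc
  filter_upwards [hω q hq2] with n hn
  intro τ1 τ2 h01 h12 hκτ
  have hcq : c < (q : ℝ) := by exact_mod_cast hq1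
  exact le_trans (le_of_lt hcq) (hn τ1 τ2 h01 h12 hκτ)
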